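/- Let H be a Hilbert space, T ∈ B(H), a, c > 0, and let E ∈ B(H) be an idempotent with ‖TE‖ ≤ a and ‖T(I−E)ξ‖ ≥ c‖ξ‖ for all ξ in the range of I−E. Let F be the orthogonal projection onto the orthogonal complement of the closure of the range of T(I−E). Then ‖T*F‖ ≤ a and ‖T*(I−F)β‖ ≥ c‖β‖ for all β in the range of I−F. -/

import Mathlib

open scoped InnerProductSpace

open ContinuousLinearMap in
/-- If `E` is an idempotent with `‖TE‖ ≤ a` and `T(I-E)` bounded below by `c` on the
range of `I - E`, and `F` is the orthogonal projection onto the orthogonal complement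
of `closure (Ran T(I-E))`, then `‖T*F‖ ≤ a` and `T*` is bounded below by `c` on the
range of `I - F`. -/
theorem stmt6 {H : Type*} [NormedAddCommGroup H] [InnerProductSpace ℂ H]
    [CompleteSpace H] (T E F : H →L[ℂ] H) (a c : ℝ) (ha : 0 < a) (hc : 0 < c)
    (hE : IsIdempotentElem E) (hTE : ‖T * E‖ ≤ a)
    (hlow : ∀ ξ ∈ LinearMap.range ((1 - E : H →L[ℂ] H) : H →ₗ[ℂ] H), c * ‖ξ‖ ≤ ‖T ξ‖)
    (hF1 : IsIdempotentElem F) (hF2 : IsSelfAdjoint F)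
    (hFrange : LinearMap.range (F : H →ₗ[ℂ] H)
      = ((LinearMap.range ((T * (1 - E) : H →L[ℂ] H) : H →ₗ[ℂ] H)).topologicalClosure)ᗮ) :
    ‖adjoint T * F‖ ≤ a ∧
      ∀ β ∈ LinearMap.range ((1 - F : H →L[ℂ] H) : H →ₗ[ℂ] H), c * ‖β‖ ≤ ‖adjoint T β‖ := by
  have haF : adjoint F = F := (ContinuousLinearMap.isSelfAdjoint_iff').mp hF2
  set S := LinearMap.range ((T * (1 - E) : H →L[ℂ] H) : H →ₗ[ℂ] H) with hS
  set M := S.topologicalClosure with hM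
  -- F is inner-symmetric
  have hsym : ∀ x y : H, ⟪F x, y⟫_ℂ = ⟪x, F y⟫_ℂ := by
    intro x y
    rw [← adjoint_inner_left, haF]
  -- F vanishes on range of T(1-E)
  have hFS : ∀ y ∈ S, F y = 0 := by
    intro y hy
    have h1 : F y ∈ LinearMap.range (F : H →ₗ[ℂ] H) := LinearMap.mem_range_self _ y
    rw [hFrange] at h1
    have h2 : (⟪y, F y⟫_ℂ) = 0 := h1 y (Submodule.le_topologicalClosure S hy)
    have h3 : (⟪F y, F y⟫_ℂ) = 0 := by
      rw [hsym]
      have h4 : F (F y) = F y := by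
        simpa [ContinuousLinearMap.mul_apply] using DFunLike.congr_fun hF1 y
      rw [h4, h2]
    exact inner_self_eq_zero.mp h3
  -- F is a contraction
  have hFnorm : ∀ x : H, ‖F x‖ ≤ ‖x‖ := by
    intro x
    by_cases h : F x = 0
    · simp [h]
    · have h1 : (‖F x‖ : ℝ) ^ 2 = RCLike.re ⟪F x, F x⟫_ℂ :=
        (inner_self_eq_norm_sq (𝕜 := ℂ) _).symm
      have h2 : F (F x) = F x := by
        simpa [ContinuousLinearMap.mul_apply] using DFunLike.congr_fun hF1 x
      have h3 : RCLike.re ⟪F x, F x⟫_ℂ ≤ ‖x‖ * ‖F x‖ := by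
        calc RCLike.re ⟪F x, F x⟫_ℂ = RCLike.re ⟪x, F (F x)⟫_ℂ := by rw [hsym]
          _ ≤ ‖⟪x, F (F x)⟫_ℂ‖ := RCLike.re_le_norm _
          _ ≤ ‖x‖ * ‖F (F x)‖ := norm_inner_le_norm _ _
          _ = ‖x‖ * ‖F x‖ := by rw [h2]
      have h4 : ‖F x‖ * ‖F x‖ ≤ ‖x‖ * ‖F x‖ := by
        rw [← sq] at *; nlinarith [h1, h3]
      exact le_of_mul_le_mul_right h4 (norm_pos_iff.mpr h)
  constructor
  · -- the norm bound
    have hadj : adjoint T * F = adjoint (F * T) := by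
      rw [show F * T = F ∘L T from rfl, adjoint_comp, haF]; rfl
    rw [hadj, LinearIsometryEquiv.norm_map]
    refine opNorm_le_bound _ ha.le fun x => ?_
    have hx : T x = T (E x) + (T * (1 - E)) x := by
      simp [ContinuousLinearMap.mul_apply, ContinuousLinearMap.sub_apply, map_sub]
    have h0 : F ((T * (1 - E)) x) = 0 := hFS _ (LinearMap.mem_range_self _ x)
    calc ‖(F * T) x‖ = ‖F (T (E x))‖ := by
          simp only [ContinuousLinearMap.mul_apply]
          rw [hx, map_add, h0, add_zero]
      _ ≤ ‖T (E x)‖ := hFnorm _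
      _ = ‖(T * E) x‖ := rfl
      _ ≤ ‖T * E‖ * ‖x‖ := le_opNorm _ _
      _ ≤ a * ‖x‖ := by gcongr
  · -- the lower bound
    intro β hβmem
    -- F β = 0
    have hFβ : F β = 0 := by
      obtain ⟨ξ, hξ⟩ := hβmem
      have : β = ξ - F ξ := by
        rw [← hξ]; simp [ContinuousLinearMap.sub_apply]
      have h4 : F (F ξ) = F ξ := by
        simpa [ContinuousLinearMap.mul_apply] using DFunLike.congr_fun hF1 ξ
      rw [this, map_sub, h4, sub_self]
    -- β ∈ closure of S
    have hβM : β ∈ M := by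
      have h1 : β ∈ Mᗮᗮ := by
        intro u hu
        rw [← hFrange] at hu
        obtain ⟨x, rfl⟩ := hu
        rw [ContinuousLinearMap.coe_coe, hsym, hFβ, inner_zero_right]
      rwa [Submodule.orthogonal_orthogonal_eq_closure,
        IsClosed.submodule_topologicalClosure_eq S.isClosed_topologicalClosure] at h1
    by_cases hβ0 : β = 0
    · simp [hβ0]
    have hβpos : (0:ℝ) < ‖β‖ := norm_pos_iff.mpr hβ0
    -- main inequality via approximation
    have key : c * ‖β‖ * ‖β‖ ≤ ‖adjoint T β‖ * ‖β‖ := by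
      refine le_of_forall_pos_le_add fun ε hε => ?_
      set D : ℝ := ‖adjoint T β‖ + c * ‖β‖ + 1 with hD
      have hDpos : 0 < D := by positivity
      have hδ : 0 < ε / D := by positivity
      have hclo : β ∈ closure (S : Set H) := hβM
      obtain ⟨x, hxS, hxd⟩ := Metric.mem_closure_iff.mp hclo _ hδ
      obtain ⟨ξ, hξ⟩ := hxS
      -- lower bound on ‖x‖ versus ‖(1-E)ξ‖
      have hxval : x = T ((1 - E) ξ) := by rw [← hξ]; rfl
      have hlow' : c * ‖(1 - E) ξ‖ ≤ ‖x‖ := by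
        rw [hxval]; exact hlow _ (LinearMap.mem_range_self _ ξ)
      have hdist : ‖β - x‖ < ε / D := by rwa [← dist_eq_norm]
      have hxle : ‖x‖ ≤ ‖β‖ + ε / D := by
        have h := norm_sub_norm_le x β
        rw [norm_sub_rev] at h
        linarith
      -- inner product estimates
      have hinner1 : (⟪β, x⟫_ℂ) = ⟪adjoint T β, (1 - E) ξ⟫_ℂ := by
        rw [adjoint_inner_left, hxval]
      have h1 : ‖(⟪β, x⟫_ℂ)‖ ≤ ‖adjoint T β‖ * ‖(1 - E) ξ‖ := by
        rw [hinner1]; exact norm_inner_le_norm _ _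
      have h2 : c * ‖(⟪β, x⟫_ℂ)‖ ≤ ‖adjoint T β‖ * ‖x‖ := by
        calc c * ‖(⟪β, x⟫_ℂ)‖ ≤ c * (‖adjoint T β‖ * ‖(1 - E) ξ‖) := by
              gcongr
          _ = ‖adjoint T β‖ * (c * ‖(1 - E) ξ‖) := by ring
          _ ≤ ‖adjoint T β‖ * ‖x‖ := by
              gcongr
      have h3 : ‖β‖ ^ 2 ≤ ‖(⟪β, x⟫_ℂ)‖ + ‖β‖ * (ε / D) := by
        have hsplit : (⟪β, β⟫_ℂ) = ⟪β, x⟫_ℂ + ⟪β, β - x⟫_ℂ := by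
          rw [← inner_add_right, add_sub_cancel]
        have hb2 : ‖(⟪β, β⟫_ℂ)‖ = ‖β‖ ^ 2 := by
          rw [inner_self_eq_norm_sq_to_K (𝕜 := ℂ)]
          push_cast
          simp [sq_abs]
        calc ‖β‖ ^ 2 = ‖(⟪β, β⟫_ℂ)‖ := hb2.symm
          _ ≤ ‖(⟪β, x⟫_ℂ)‖ + ‖(⟪β, β - x⟫_ℂ)‖ := by rw [hsplit]; exact norm_add_le _ _
          _ ≤ ‖(⟪β, x⟫_ℂ)‖ + ‖β‖ * ‖β - x‖ := by
              gcongr; exact norm_inner_le_norm _ _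
          _ ≤ ‖(⟪β, x⟫_ℂ)‖ + ‖β‖ * (ε / D) := by
              gcongr
      -- combine
      have hεD : (‖adjoint T β‖ + c * ‖β‖) * (ε / D) ≤ ε := by
        have hAD : ‖adjoint T β‖ + c * ‖β‖ ≤ D := by rw [hD]; linarith
        calc (‖adjoint T β‖ + c * ‖β‖) * (ε / D) ≤ D * (ε / D) := by gcongr
          _ = ε := by field_simp
      nlinarith [h2, h3, hεD, mul_le_mul_of_nonneg_left h3 hc.le,
        mul_le_mul_of_nonneg_left hxle (norm_nonneg (adjoint T β)), hδ.le]
    calc c * ‖β‖ = c * ‖β‖ * ‖β‖ / ‖β‖ := by field_simp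
      _ ≤ ‖adjoint T β‖ * ‖β‖ / ‖β‖ := by gcongr
      _ = ‖adjoint T β‖ := by field_simp
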